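/- Let G be a finite simple graph on n vertices, let k ≥ 2 be an integer, and let c₁ ≥ c₂ ≥ ⋯ ≥ c_m be the sizes of the connected components of G. Suppose that (i) c₁ ≤ n/k, (ii) the number of components of size at most 2 is at least r·n for some real r > 0, and (iii) c_i ≤ r·n/k for every index i > k. Then the k-section width satisfies w_k(G) ≤ k/2. -/

import Mathlib

open Finset

/-- The size (number of vertices) of a connected component of a graph on `Fin n`. -/
noncomputable def compSize {n : ℕ} (G : SimpleGraph (Fin n)) (C : G.ConnectedComponent) : ℕ :=
  {v : Fin n | G.connectedComponentMk v = C}.ncard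

/-- A labelled partition `P : Fin n → Fin k` is balanced if the part sizes pairwise
differ by at most 1. -/
def IsBalancedPartition {n k : ℕ} (P : Fin n → Fin k) : Prop :=
  ∀ j j' : Fin k,
    ((Finset.univ.filter (fun i => P i = j)).card : ℤ)
      ≤ ((Finset.univ.filter (fun i => P i = j')).card : ℤ) + 1

/-- The number of edges of `G` whose two endpoints lie in two distinct parts of `P`. -/
noncomputable def cutSize {n k : ℕ} (G : SimpleGraph (Fin n)) (P : Fin n → Fin k) : ℕ :=
  {e ∈ G.edgeSet | ¬ (Sym2.map P e).IsDiag}.ncard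

/-- The `k`-section width: the minimum number of cross edges over balanced `k`-partitions. -/
noncomputable def kSectionWidth {n : ℕ} (G : SimpleGraph (Fin n)) (k : ℕ) : ℕ :=
  sInf {w | ∃ P : Fin n → Fin k, IsBalancedPartition P ∧ cutSize G P = w}

section Aux

lemma distribute {α ι : Type*} [DecidableEq α] [DecidableEq ι] [Fintype ι] [Nonempty ι] :
    ∀ (N : ℕ) (s : Finset α) (q : ι → ℕ), s.card = N → (∑ j, q j) = s.card →
    ∃ f : α → ι, ∀ j, (s.filter (fun v => f v = j)).card = q j := by
  intro N
  induction N with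
  | zero =>
    intro s q hcard hsum
    refine ⟨fun _ => Classical.arbitrary ι, fun j => ?_⟩
    have h1 : (s.filter (fun v => (fun _ => Classical.arbitrary ι) v = j)).card = 0 := by
      have := Finset.card_filter_le s (fun v => (fun _ => Classical.arbitrary ι) v = j)
      omega
    have h2 : q j = 0 := by
      have : q j ≤ ∑ j, q j := Finset.single_le_sum (fun _ _ => Nat.zero_le _) (mem_univ j)
      omega
    omega
  | succ N ih =>
    intro s q hcard hsum
    have hne : s.Nonempty := by
      rw [← Finset.card_pos]; omega
    obtain ⟨x, hx⟩ := hne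
    have hsum1 : 1 ≤ ∑ j, q j := by omega
    have hj0 : ∃ j0, 1 ≤ q j0 := by
      by_contra h
      push_neg at h
      have : ∑ j, q j = 0 := Finset.sum_eq_zero (fun j _ => by have := h j; omega)
      omega
    obtain ⟨j0, hj0⟩ := hj0
    set s' := s.erase x with hs'
    have hcard' : s'.card = N := by
      rw [hs', Finset.card_erase_of_mem hx]; omega
    set q' := Function.update q j0 (q j0 - 1) with hq'
    have hsumq' : (∑ j, q' j) = s'.card := by
      rw [hcard', hq']
      rw [Finset.sum_update_of_mem (mem_univ j0)]
      have h : ∑ j, q j = (∑ x ∈ univ \ {j0}, q x) + q j0 :=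
        Finset.sum_eq_sum_sdiff_singleton_add (mem_univ j0) q
      omega
    obtain ⟨f, hf⟩ := ih s' q' hcard' hsumq'
    refine ⟨Function.update f x j0, fun j => ?_⟩
    have hxs' : x ∉ s' := Finset.notMem_erase x s
    have hsplit : s = insert x s' := by
      rw [hs', Finset.insert_erase hx]
    have hfilter : s'.filter (fun v => Function.update f x j0 v = j)
        = s'.filter (fun v => f v = j) := by
      apply Finset.filter_congr
      intro v hv
      have : v ≠ x := by rintro rfl; exact hxs' hv
      simp [Function.update_of_ne this]
    rw [hsplit, Finset.filter_insert]
    by_cases hj : j = j0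
    · subst hj
      rw [if_pos (by simp)]
      rw [Finset.card_insert_of_notMem (fun h => hxs' (Finset.mem_of_mem_filter _ h))]
      rw [hfilter, hf]
      simp [hq', Function.update_self]
      omega
    · rw [if_neg (by simp [Function.update_self]; exact fun h => hj h.symm)]
      rw [hfilter, hf]
      rw [hq', Function.update_of_ne hj]

lemma pack1 {k : ℕ} (hk : 0 < k) (t : Fin k → ℕ) (R : ℝ) :
    ∀ (p : ℕ) (b : Fin p → ℕ),
    (∀ i j, b i ≤ t j) →
    ((∑ i, (b i : ℝ)) + R ≤ ∑ j, (t j : ℝ)) →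
    (∀ i : Fin p, k ≤ i.val → ((k : ℝ) * b i ≤ R)) →
    ∃ f : Fin p → Fin k, ∀ j, (∑ i, if f i = j then b i else 0) ≤ t j := by
  intro p
  induction p with
  | zero =>
    intro b _ _ _
    exact ⟨fun i => i.elim0, fun j => by simp⟩
  | succ p ih =>
    intro b hfit hsum hsm
    have hcast : ∀ i : Fin p, b i.castSucc = b i.castSucc := fun _ => rfl
    have hsum' : (∑ i : Fin p, (b i.castSucc : ℝ)) + R ≤ ∑ j, (t j : ℝ) := by
      have h1 : (∑ i : Fin (p+1), (b i : ℝ)) =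
          (∑ i : Fin p, (b i.castSucc : ℝ)) + (b (Fin.last p) : ℝ) :=
        Fin.sum_univ_castSucc _
      have h2 : (0:ℝ) ≤ (b (Fin.last p) : ℝ) := Nat.cast_nonneg _
      linarith
    obtain ⟨f, hf⟩ := ih (fun i => b i.castSucc) (fun i j => hfit _ j) hsum'
      (fun i hi => hsm i.castSucc hi)
    set x := b (Fin.last p) with hx
    have key : ∃ j0 : Fin k, (∑ i : Fin p, if f i = j0 then b i.castSucc else 0) + x ≤ t j0 := by
      by_cases hp : p < k
      · -- some bin not in range of f
        have himg : (univ.image f).card < k := by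
          calc (univ.image f).card ≤ (univ : Finset (Fin p)).card := Finset.card_image_le
          _ = p := by simp
          _ < k := hp
        have : ∃ j0 : Fin k, j0 ∉ univ.image f := by
          by_contra h
          push_neg at h
          have : (univ : Finset (Fin k)) ⊆ univ.image f := fun j _ => h j
          have := Finset.card_le_card this
          simp at this
          omega
        obtain ⟨j0, hj0⟩ := this
        refine ⟨j0, ?_⟩
        have : (∑ i : Fin p, if f i = j0 then b i.castSucc else 0) = 0 := by
          apply Finset.sum_eq_zero
          intro i _
          have : f i ≠ j0 := by
            intro h; exact hj0 (Finset.mem_image.mpr ⟨i, mem_univ i, h⟩)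
          simp [this]
        rw [this]
        simpa using hfit (Fin.last p) j0
      · push_neg at hp
        by_contra hcon
        push_neg at hcon
        -- all bins full
        have hloads : ∀ j, (t j : ℝ) + 1 ≤ (∑ i : Fin p, if f i = j then (b i.castSucc : ℝ) else 0) + x := by
          intro j
          have := hcon j
          have h2 : t j + 1 ≤ (∑ i : Fin p, if f i = j then b i.castSucc else 0) + x := by omega
          have h3 : ((∑ i : Fin p, if f i = j then b i.castSucc else 0 : ℕ) : ℝ)
              = ∑ i : Fin p, if f i = j then (b i.castSucc : ℝ) else 0 := by
            push_cast; rfl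
          calc (t j : ℝ) + 1 ≤ ((∑ i : Fin p, if f i = j then b i.castSucc else 0 : ℕ) : ℝ) + (x:ℝ) := by
                exact_mod_cast h2
          _ = _ := by rw [h3]
        have hsumloads : (∑ j, (t j : ℝ)) + k ≤ (∑ i : Fin p, (b i.castSucc : ℝ)) + k * x := by
          have := Finset.sum_le_sum (fun j (_ : j ∈ (univ : Finset (Fin k))) => hloads j)
          rw [Finset.sum_add_distrib] at this
          have hswap : (∑ j : Fin k, ∑ i : Fin p, if f i = j then (b i.castSucc : ℝ) else 0)
              = ∑ i : Fin p, (b i.castSucc : ℝ) := by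
            rw [Finset.sum_comm]
            apply Finset.sum_congr rfl
            intro i _
            simp
          simp only [Finset.sum_add_distrib, Finset.sum_const, Finset.card_univ] at this ⊢
          simp at this
          rw [hswap] at this
          simpa [mul_comm] using this
        have hxR : (k : ℝ) * x ≤ R := hsm (Fin.last p) (by simpa using hp)
        have hlast : (∑ i : Fin p, (b i.castSucc : ℝ)) + (x : ℝ) = ∑ i : Fin (p+1), (b i : ℝ) :=
          (Fin.sum_univ_castSucc (f := fun i : Fin (p+1) => (b i : ℝ))).symm
        have hk1 : (1:ℝ) ≤ k := by exact_mod_cast hk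
        nlinarith [Nat.cast_nonneg (α := ℝ) x]
    obtain ⟨j0, hj0⟩ := key
    refine ⟨Fin.lastCases j0 f, fun j => ?_⟩
    rw [Fin.sum_univ_castSucc]
    simp only [Fin.lastCases_castSucc, Fin.lastCases_last]
    by_cases hj : j0 = j
    · subst hj
      simpa using hj0
    · rw [if_neg hj]
      simpa using hf j

lemma solve1 (D o w : ℕ) (h : D ≤ o + 2 * w) (h2 : D % 2 = 0 ∨ 0 < o) :
    ∃ a1 b1, a1 ≤ o ∧ b1 ≤ w ∧ a1 + 2 * b1 = D := by
  refine ⟨D - 2 * min w (D / 2), min w (D / 2), ?_, ?_, ?_⟩ <;> omega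

lemma fill {k : ℕ} (d : Fin k → ℕ) :
    ∀ (N : ℕ) (s : Finset (Fin k)) (o w : ℕ), s.card = N → (∑ j ∈ s, d j) = o + 2 * w →
    ∃ (a b : Fin k → ℕ) (SP : Fin k → Fin k → ℕ),
      (∀ j ∈ s, a j + 2 * b j + (∑ j', (SP j j' + SP j' j)) = d j) ∧
      (∀ j, j ∉ s → a j = 0 ∧ b j = 0 ∧ (∀ j', SP j j' = 0 ∧ SP j' j = 0)) ∧
      (∑ j, a j) = o ∧
      (∑ j, b j) + (∑ j, ∑ j', SP j j') = w ∧
      (∑ j, ∑ j', SP j j') ≤ s.card / 2 := by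
  intro N
  induction N using Nat.strong_induction_on with
  | _ N ih =>
  intro s o w hcard hsum
  rcases Nat.eq_zero_or_pos N with hN | hN
  · -- s empty
    have hs : s = ∅ := Finset.card_eq_zero.mp (by omega)
    subst hs
    simp only [Finset.sum_empty] at hsum
    refine ⟨fun _ => 0, fun _ => 0, fun _ _ => 0, ?_, ?_, ?_, ?_, ?_⟩ <;> simp <;> omega
  · have hne : s.Nonempty := by rw [← Finset.card_pos]; omega
    obtain ⟨j1, hj1⟩ := hne
    set D := d j1 with hD
    have hsplit1 : ∑ j ∈ s, d j = D + ∑ j ∈ s.erase j1, d j :=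
      (Finset.add_sum_erase s d hj1).symm
    have hDle : D ≤ o + 2 * w := by omega
    by_cases hA : D % 2 = 0 ∨ 0 < o
    · -- no split for bin j1
      obtain ⟨a1, b1, ha1, hb1, hab⟩ := solve1 D o w hDle hA
      have hcard' : (s.erase j1).card = N - 1 := by
        rw [Finset.card_erase_of_mem hj1]; omega
      have hsum' : (∑ j ∈ s.erase j1, d j) = (o - a1) + 2 * (w - b1) := by omega
      obtain ⟨a, b, SP, H1, H2, H3, H4, H5⟩ :=
        ih (N - 1) (by omega) (s.erase j1) (o - a1) (w - b1) hcard' hsum'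
      have hj1e : j1 ∉ s.erase j1 := Finset.notMem_erase _ _
      obtain ⟨haz, hbz, hspz⟩ := H2 j1 hj1e
      refine ⟨Function.update a j1 a1, Function.update b j1 b1, SP, ?_, ?_, ?_, ?_, ?_⟩
      · intro j hj
        by_cases hjj : j = j1
        · subst hjj
          rw [Function.update_self, Function.update_self]
          have : (∑ j', (SP j j' + SP j' j)) = 0 :=
            Finset.sum_eq_zero (fun j' _ => by have := hspz j'; omega)
          omega
        · rw [Function.update_of_ne hjj, Function.update_of_ne hjj]
          exact H1 j (Finset.mem_erase.mpr ⟨hjj, hj⟩)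
      · intro j hj
        have hjj : j ≠ j1 := fun h => hj (h ▸ hj1)
        rw [Function.update_of_ne hjj, Function.update_of_ne hjj]
        exact H2 j (fun h => hj (Finset.mem_of_mem_erase h))
      · rw [Finset.sum_update_of_mem (mem_univ j1)]
        have h := Finset.sum_eq_sum_sdiff_singleton_add (mem_univ j1) a
        omega
      · rw [Finset.sum_update_of_mem (mem_univ j1)]
        have h := Finset.sum_eq_sum_sdiff_singleton_add (mem_univ j1) b
        omega
      · calc (∑ j, ∑ j', SP j j') ≤ (s.erase j1).card / 2 := H5
        _ ≤ s.card / 2 := Nat.div_le_div_right (Finset.card_le_card (Finset.erase_subset _ _))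
    · -- split case : D odd, o = 0
      push_neg at hA
      obtain ⟨hDodd, ho⟩ := hA
      have ho0 : o = 0 := by omega
      subst ho0
      -- find second odd bin
      have hodd2 : ∃ j2 ∈ s.erase j1, d j2 % 2 = 1 := by
        by_contra h
        push_neg at h
        have heven : (∑ j ∈ s.erase j1, d j) % 2 = 0 := by
          rw [Finset.sum_nat_mod]
          have : (∑ j ∈ s.erase j1, d j % 2) = 0 :=
            Finset.sum_eq_zero (fun j hj => by have := h j hj; omega)
          rw [this]
        omega
      obtain ⟨j2, hj2e, hj2odd⟩ := hodd2
      have hj2s : j2 ∈ s := Finset.mem_of_mem_erase hj2e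
      have hj21 : j2 ≠ j1 := (Finset.mem_erase.mp hj2e).1
      set D2 := d j2 with hD2
      have hsplit2 : ∑ j ∈ s.erase j1, d j = D2 + ∑ j ∈ (s.erase j1).erase j2, d j :=
        (Finset.add_sum_erase _ d hj2e).symm
      set b1 := D / 2 with hb1def
      set b2 := D2 / 2 with hb2def
      have hwge : b1 + b2 + 1 ≤ w := by omega
      set s'' := (s.erase j1).erase j2 with hs''
      have hcard'' : s''.card = N - 2 := by
        rw [hs'', Finset.card_erase_of_mem hj2e, Finset.card_erase_of_mem hj1]; omega
      have hsum'' : (∑ j ∈ s'', d j) = 0 + 2 * (w - (b1 + b2 + 1)) := by omega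
      have hN2 : 2 ≤ N := by
        have : ({j1, j2} : Finset (Fin k)) ⊆ s := by
          intro x hx
          simp only [Finset.mem_insert, Finset.mem_singleton] at hx
          rcases hx with rfl | rfl
          · exact hj1
          · exact hj2s
        have h2 := Finset.card_le_card this
        rw [Finset.card_insert_of_notMem (by simpa using (fun h => hj21 h.symm : ¬ j1 = j2)), Finset.card_singleton] at h2
        omega
      obtain ⟨a, b, SP, H1, H2, H3, H4, H5⟩ :=
        ih (N - 2) (by omega) s'' 0 (w - (b1 + b2 + 1)) hcard'' hsum''
      have hj1n : j1 ∉ s'' := fun h => (Finset.notMem_erase j1 s) (Finset.mem_of_mem_erase h)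
      have hj2n : j2 ∉ s'' := Finset.notMem_erase _ _
      obtain ⟨haz1, hbz1, hspz1⟩ := H2 j1 hj1n
      obtain ⟨haz2, hbz2, hspz2⟩ := H2 j2 hj2n
      set SP' := fun u v => SP u v + (if u = j1 ∧ v = j2 then 1 else 0) with hSP'
      have hSPsum : (∑ u, ∑ v, SP' u v) = (∑ u, ∑ v, SP u v) + 1 := by
        rw [hSP']
        simp only [Finset.sum_add_distrib]
        have : (∑ u : Fin k, ∑ v : Fin k, if u = j1 ∧ v = j2 then 1 else 0) = 1 := by
          rw [Finset.sum_eq_single j1]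
          · rw [Finset.sum_eq_single j2]
            · simp
            · intro v _ hv; simp [hv]
            · simp
          · intro u _ hu
            apply Finset.sum_eq_zero
            intro v _
            simp [hu]
          · simp
        omega
      -- x' values
      have hx' : ∀ j, (∑ j', (SP' j j' + SP' j' j)) =
          (∑ j', (SP j j' + SP j' j)) + (if j = j1 then 1 else 0) + (if j = j2 then 1 else 0) := by
        intro j
        rw [hSP']
        simp only
        have : ∀ j', (SP j j' + (if j = j1 ∧ j' = j2 then 1 else 0)
            + (SP j' j + (if j' = j1 ∧ j = j2 then 1 else 0)))
            = (SP j j' + SP j' j) + ((if j = j1 ∧ j' = j2 then 1 else 0)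
              + (if j' = j1 ∧ j = j2 then 1 else 0)) := fun j' => by ring
        simp only [this]
        rw [Finset.sum_add_distrib, Finset.sum_add_distrib, Finset.sum_add_distrib]
        have e1 : (∑ j' : Fin k, if j = j1 ∧ j' = j2 then 1 else 0) = if j = j1 then 1 else 0 := by
          by_cases hj : j = j1 <;> simp [hj]
        have e2 : (∑ j' : Fin k, if j' = j1 ∧ j = j2 then 1 else 0) = if j = j2 then 1 else 0 := by
          by_cases hj : j = j2 <;> simp [hj]
        rw [e1, e2]
        ring
      refine ⟨a, Function.update (Function.update b j1 b1) j2 b2, SP', ?_, ?_, ?_, ?_, ?_⟩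
      · intro j hj
        by_cases hjj1 : j = j1
        · subst hjj1
          rw [Function.update_of_ne (fun h => hj21 h.symm), Function.update_self, haz1, hx' j]
          have hz : (∑ j', (SP j j' + SP j' j)) = 0 :=
            Finset.sum_eq_zero (fun j' _ => by have := hspz1 j'; omega)
          rw [if_pos rfl, if_neg (fun h => hj21 h.symm)]
          omega
        · by_cases hjj2 : j = j2
          · subst hjj2
            rw [Function.update_self, haz2, hx' j]
            have hz : (∑ j', (SP j j' + SP j' j)) = 0 :=
              Finset.sum_eq_zero (fun j' _ => by have := hspz2 j'; omega)
            rw [if_neg hjj1, if_pos rfl]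
            omega
          · rw [Function.update_of_ne hjj2, Function.update_of_ne hjj1, hx' j,
              if_neg hjj1, if_neg hjj2]
            have hmem : j ∈ s'' := by
              rw [hs'']
              exact Finset.mem_erase.mpr ⟨hjj2, Finset.mem_erase.mpr ⟨hjj1, hj⟩⟩
            have := H1 j hmem
            omega
      · intro j hj
        have hjj1 : j ≠ j1 := fun h => hj (h ▸ hj1)
        have hjj2 : j ≠ j2 := fun h => hj (h ▸ hj2s)
        have hjn : j ∉ s'' := fun h => hj (Finset.mem_of_mem_erase (Finset.mem_of_mem_erase h))
        obtain ⟨ha, hb, hsp⟩ := H2 j hjn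
        refine ⟨ha, ?_, ?_⟩
        · rw [Function.update_of_ne hjj2, Function.update_of_ne hjj1]; exact hb
        · intro j'
          rw [hSP']
          simp only
          constructor
          · rw [if_neg (fun h => hjj1 h.1), (hsp j').1]
          · rw [if_neg (fun h => hjj2 h.2), (hsp j').2]
      · exact H3
      · rw [hSPsum, Finset.sum_update_of_mem (mem_univ j2)]
        have hj1m : j1 ∈ (univ : Finset (Fin k)) \ {j2} := by
          simp only [Finset.mem_sdiff, Finset.mem_univ, Finset.mem_singleton, true_and]
          exact fun h => hj21 h.symm
        rw [Finset.sum_update_of_mem hj1m]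
        have e3 := Finset.sum_eq_sum_sdiff_singleton_add (mem_univ j2) b
        have e4 := Finset.sum_eq_sum_sdiff_singleton_add hj1m b
        omega
      · rw [hSPsum]
        have : s''.card = N - 2 := hcard''
        have h5 := H5
        rw [this] at h5
        omega

end Aux

theorem ksection_le_of_small_components
    {n k m : ℕ} (hk : 2 ≤ k) (G : SimpleGraph (Fin n))
    (c : Fin m → ℕ) (hmono : Antitone c)
    (e : G.ConnectedComponent ≃ Fin m)
    (hsize : ∀ C : G.ConnectedComponent, compSize G C = c (e C))
    (r : ℝ) (hr : 0 < r)
    (h1 : ∀ i : Fin m, (c i : ℝ) ≤ (n : ℝ) / k)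
    (h2 : r * n ≤ ((Finset.univ.filter (fun i : Fin m => c i ≤ 2)).card : ℝ))
    (h3 : ∀ i : Fin m, k ≤ (i : ℕ) → (c i : ℝ) ≤ r * n / k) :
    (kSectionWidth G k : ℝ) ≤ (k : ℝ) / 2 := by
  classical
  have hk0 : 0 < k := by omega
  have hkR : (0 : ℝ) < k := by exact_mod_cast hk0
  haveI : Nonempty (Fin k) := ⟨⟨0, hk0⟩⟩
  set comp : Fin n → Fin m := fun v => e (G.connectedComponentMk v) with hcomp
  -- fibers of comp have card c i
  have hfiber : ∀ i : Fin m, (univ.filter (fun v => comp v = i)).card = c i := by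
    intro i
    have h0 : compSize G (e.symm i)
        = (univ.filter (fun v => G.connectedComponentMk v = e.symm i)).card := by
      rw [compSize, Set.ncard_eq_toFinset_card']
      congr 1
      ext v
      simp
    have h1' : compSize G (e.symm i) = c i := by
      rw [hsize (e.symm i), Equiv.apply_symm_apply]
    rw [← h1', h0]
    congr 1
    ext v
    simp only [Finset.mem_filter, Finset.mem_univ, true_and, hcomp]
    constructor
    · intro h; rw [← h, Equiv.symm_apply_apply]
    · intro h; rw [h, Equiv.apply_symm_apply]
  have hcpos : ∀ i, 1 ≤ c i := by
    intro i
    obtain ⟨v, hv⟩ := (e.symm i).exists_rep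
    rw [← hfiber i]
    refine Finset.card_pos.mpr ⟨v, ?_⟩
    simp only [Finset.mem_filter, Finset.mem_univ, true_and, hcomp]
    have hv' : G.connectedComponentMk v = e.symm i := hv
    rw [hv', Equiv.apply_symm_apply]
  have hsumc : (∑ i, c i) = n := by
    have h := Finset.card_eq_sum_card_fiberwise
      (f := comp) (s := univ) (t := univ) (fun x _ => mem_univ _)
    simp only [Finset.card_univ, Fintype.card_fin] at h
    rw [h]
    exact Finset.sum_congr rfl fun i _ => (hfiber i).symm
  -- targets
  set dq := n / k with hdq
  set t : Fin k → ℕ := fun j => if j.val < n % k then dq + 1 else dq with ht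
  have htval : ∀ j, dq ≤ t j ∧ t j ≤ dq + 1 := by
    intro j
    rw [ht]
    dsimp only
    split <;> omega
  have hsumt : (∑ j, t j) = n := by
    rw [ht]
    rw [Fin.sum_univ_eq_sum_range (fun j => if j < n % k then dq + 1 else dq) k]
    have hmod : n % k ≤ k := le_of_lt (Nat.mod_lt n hk0)
    rw [Finset.range_eq_Ico, ← Finset.sum_Ico_consecutive _ (Nat.zero_le (n % k)) hmod]
    rw [Finset.sum_congr rfl (fun x hx => if_pos (Finset.mem_Ico.mp hx).2),
      Finset.sum_congr (rfl : Finset.Ico (n % k) k = Finset.Ico (n % k) k)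
        (fun x hx => if_neg (by have := (Finset.mem_Ico.mp hx).1; omega))]
    simp only [Finset.sum_const, Nat.card_Ico, smul_eq_mul, Nat.sub_zero]
    have hmodlt : n % k < k := Nat.mod_lt n hk0
    have e1 : (n % k) * (dq + 1) = (n % k) * dq + n % k := by ring
    have e2 : (k - n % k) * dq = k * dq - (n % k) * dq := Nat.sub_mul _ _ _
    have e3 : (n % k) * dq ≤ k * dq := Nat.mul_le_mul_right _ (le_of_lt hmodlt)
    have e4 : k * dq + n % k = n := by rw [hdq]; exact Nat.div_add_mod n k
    omega
  have hcle : ∀ i, c i ≤ dq := by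
    intro i
    rw [hdq, Nat.le_div_iff_mul_le hk0]
    have := (le_div_iff₀ hkR).mp (h1 i)
    exact_mod_cast this
  -- big components p
  set p := (univ.filter (fun i : Fin m => 3 ≤ c i)).card with hp
  have hBiff : ∀ i : Fin m, 3 ≤ c i ↔ i.val < p := by
    intro i
    constructor
    · intro h3c
      have hsub : Finset.Iic i ⊆ univ.filter (fun j : Fin m => 3 ≤ c j) := by
        intro j hj
        rw [Finset.mem_Iic] at hj
        exact Finset.mem_filter.mpr ⟨mem_univ _, le_trans h3c (hmono hj)⟩
      have := Finset.card_le_card hsub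
      rw [Fin.card_Iic] at this
      omega
    · intro hlt
      by_contra hcon
      push_neg at hcon
      have hsub : univ.filter (fun j : Fin m => 3 ≤ c j) ⊆ Finset.Iio i := by
        intro j hj
        rw [Finset.mem_Iio]
        by_contra hji
        push_neg at hji
        have := hmono hji
        have := (Finset.mem_filter.mp hj).2
        omega
      have := Finset.card_le_card hsub
      rw [Fin.card_Iio] at this
      omega
  have hpm : p ≤ m := by
    calc p ≤ (univ : Finset (Fin m)).card := Finset.card_filter_le _ _
    _ = m := by simp
  -- small counts
  set o := (univ.filter (fun i : Fin m => c i = 1)).card with ho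
  set w := (univ.filter (fun i : Fin m => c i = 2)).card with hw
  have hsmallcard : (univ.filter (fun i : Fin m => c i ≤ 2)).card = o + w := by
    rw [ho, hw, ← Finset.card_union_of_disjoint]
    · congr 1
      ext i
      simp only [Finset.mem_union, Finset.mem_filter, Finset.mem_univ, true_and]
      have := hcpos i
      omega
    · rw [Finset.disjoint_filter]
      intro i _ h1i
      omega
  have hsum_parts : (∑ i ∈ univ.filter (fun i : Fin m => 3 ≤ c i), c i) + (o + 2 * w) = n := by
    rw [← hsumc]
    rw [← Finset.sum_filter_add_sum_filter_not univ (fun i : Fin m => 3 ≤ c i) c]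
    congr 1
    have hsplit : univ.filter (fun i : Fin m => ¬ 3 ≤ c i)
        = (univ.filter (fun i : Fin m => c i = 1)) ∪ (univ.filter (fun i : Fin m => c i = 2)) := by
      ext i
      simp only [Finset.mem_union, Finset.mem_filter, Finset.mem_univ, true_and]
      have := hcpos i
      omega
    rw [hsplit, Finset.sum_union]
    · rw [Finset.sum_congr rfl (fun i hi => (Finset.mem_filter.mp hi).2),
        Finset.sum_congr (rfl : univ.filter (fun i : Fin m => c i = 2) = _)
          (fun i hi => (Finset.mem_filter.mp hi).2)]
      simp [ho, hw, mul_comm]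
    · rw [Finset.disjoint_filter]
      intro i _ h1i
      omega
  -- the big items
  set bitem : Fin p → ℕ := fun i => c (Fin.castLE hpm i) with hbitem
  have hbig : (∑ i : Fin p, bitem i) = ∑ i ∈ univ.filter (fun i : Fin m => 3 ≤ c i), c i := by
    refine Finset.sum_bij' (fun i _ => Fin.castLE hpm i)
      (fun i hi => ⟨i.val, (hBiff i).mp (Finset.mem_filter.mp hi).2⟩) ?_ ?_ ?_ ?_ ?_
    · intro a _
      refine Finset.mem_filter.mpr ⟨mem_univ _, ?_⟩
      rw [hBiff]
      exact a.isLt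
    · intro a ha
      exact mem_univ _
    · intro a _
      rfl
    · intro a _
      rfl
    · intro a _
      rfl
  -- apply pack1
  have hsum_pack : ((∑ i, (bitem i : ℝ)) + r * n ≤ ∑ j, (t j : ℝ)) := by
    have h1' : (∑ i, (bitem i : ℝ)) = ((∑ i, bitem i : ℕ) : ℝ) := by push_cast; rfl
    have h2' : (∑ j, (t j : ℝ)) = ((∑ j, t j : ℕ) : ℝ) := by push_cast; rfl
    rw [h1', h2', hsumt, hbig]
    have hle : r * n ≤ ((o + w : ℕ) : ℝ) := by
      rw [← hsmallcard]; exact h2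
    have : ((o + w : ℕ) : ℝ) ≤ ((o + 2 * w : ℕ) : ℝ) := by
      exact_mod_cast by omega
    have hsp : ((∑ i ∈ univ.filter (fun i : Fin m => 3 ≤ c i), c i : ℕ) : ℝ) + ((o + 2*w : ℕ) : ℝ)
        = (n : ℝ) := by
      exact_mod_cast congrArg (Nat.cast : ℕ → ℝ) hsum_parts
    linarith
  obtain ⟨f, hf⟩ := pack1 hk0 t (r * n) p bitem
    (fun i j => le_trans (hcle _) (htval j).1)
    hsum_pack
    (fun i hi => by
      have := h3 (Fin.castLE hpm i) (by simpa using hi)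
      have := (le_div_iff₀ hkR).mp this
      rw [hbitem]
      linarith)
  set ℓ : Fin k → ℕ := fun j => ∑ i : Fin p, if f i = j then bitem i else 0 with hℓ
  have hℓle : ∀ j, ℓ j ≤ t j := hf
  have hsumℓ : (∑ j, ℓ j) = ∑ i : Fin p, bitem i := by
    rw [hℓ]
    rw [Finset.sum_comm]
    refine Finset.sum_congr rfl fun i _ => ?_
    simp
  -- apply fill with d := t - ℓ
  have hsum_fill : (∑ j, (t j - ℓ j)) = o + 2 * w := by
    have h1' : (∑ j, (t j - ℓ j)) + (∑ j, ℓ j) = ∑ j, t j := by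
      rw [← Finset.sum_add_distrib]
      refine Finset.sum_congr rfl fun j _ => ?_
      have := hℓle j
      omega
    rw [hsumℓ, hbig] at h1'
    rw [hsumt] at h1'
    omega
  obtain ⟨a, b, SP, F1, F2, F3, F4, F5⟩ :=
    fill (fun j => t j - ℓ j) k univ o w (by simp) (by simpa using hsum_fill)
  -- distribute ones and twos
  obtain ⟨hO, hhO⟩ := distribute ((univ.filter (fun i : Fin m => c i = 1)).card)
    (univ.filter (fun i : Fin m => c i = 1)) a rfl (by rw [F3, ho])
  obtain ⟨hW, hhW⟩ := distribute ((univ.filter (fun i : Fin m => c i = 2)).card)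
    (univ.filter (fun i : Fin m => c i = 2))
    (Sum.elim b (fun q : Fin k × Fin k => SP q.1 q.2)) rfl
    (by
      rw [Fintype.sum_sum_type]
      simp only [Sum.elim_inl, Sum.elim_inr]
      rw [Fintype.sum_prod_type]
      rw [F4, hw])
  -- bins for big components
  set Fb : Fin m → Fin k := fun i => if h : i.val < p then f ⟨i.val, h⟩ else ⟨0, hk0⟩ with hFb
  -- two-component values
  set tval : Fin m → Fin k → ℕ := fun i j =>
    Sum.elim (fun j0 => if j0 = j then 2 else 0)
      (fun q : Fin k × Fin k => (if q.1 = j then 1 else 0) + (if q.2 = j then 1 else 0))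
      (hW i) with htval'
  set g : Fin m → Fin k → ℕ := fun i j =>
    (if 3 ≤ c i then (if Fb i = j then c i else 0) else 0)
    + (if c i = 1 then (if hO i = j then 1 else 0) else 0)
    + (if c i = 2 then tval i j else 0) with hg
  -- row sums
  have hrow : ∀ i, (∑ j, g i j) = c i := by
    intro i
    rw [hg]
    simp only
    rw [Finset.sum_add_distrib, Finset.sum_add_distrib]
    have hc := hcpos i
    rcases Nat.lt_or_ge (c i) 3 with hci | hci
    · have hciv : c i = 1 ∨ c i = 2 := by omega
      rcases hciv with hc1 | hc2
      · have hn3 : ¬ 3 ≤ c i := by omega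
        have hn2 : ¬ c i = 2 := by omega
        simp only [hn3, if_false, hc1, if_true, hn2, Finset.sum_const_zero]
        rw [Finset.sum_ite_eq univ (hO i) (fun _ => 1)]
        simp [hc1]
      · have hn3 : ¬ 3 ≤ c i := by omega
        have hn1 : ¬ c i = 1 := by omega
        simp only [hn3, if_false, hn1, hc2, if_true, Finset.sum_const_zero]
        rw [htval']
        simp only
        cases hWi : hW i with
        | inl j0 =>
          simp only [hWi, Sum.elim_inl]
          rw [Finset.sum_ite_eq univ j0 (fun _ => 2)]
          simp [hc2]
        | inr q =>
          simp only [hWi, Sum.elim_inr]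
          rw [Finset.sum_add_distrib,
            Finset.sum_ite_eq univ q.1 (fun _ => 1), Finset.sum_ite_eq univ q.2 (fun _ => 1)]
          simp [hc2]
    · have hn1 : ¬ c i = 1 := by omega
      have hn2 : ¬ c i = 2 := by omega
      simp only [hci, if_true, hn1, hn2, if_false, Finset.sum_const_zero]
      rw [Finset.sum_ite_eq univ (Fb i) (fun _ => c i)]
      simp
  -- column sums
  have hcol : ∀ j, (∑ i, g i j) = t j := by
    intro j
    rw [hg]
    simp only
    rw [Finset.sum_add_distrib, Finset.sum_add_distrib]
    have hterm1 : (∑ i, if 3 ≤ c i then (if Fb i = j then c i else 0) else 0) = ℓ j := by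
      rw [← Finset.sum_filter, hℓ]
      refine (Finset.sum_bij' (fun (i : Fin p) _ => Fin.castLE hpm i)
        (fun i hi => (⟨i.val, (hBiff i).mp (Finset.mem_filter.mp hi).2⟩ : Fin p)) ?_ ?_ ?_ ?_ ?_).symm
      · intro a' _
        refine Finset.mem_filter.mpr ⟨mem_univ _, ?_⟩
        rw [hBiff]
        exact a'.isLt
      · intro a' _
        exact mem_univ _
      · intro a' _
        rfl
      · intro a' _
        rfl
      · intro a' ha'
        have hFbe : Fb (Fin.castLE hpm a') = f a' := by
          rw [hFb]
          simp only [Fin.coe_castLE]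
          rw [dif_pos a'.isLt]
        rw [hFbe, hbitem]
    have hterm2 : (∑ i, if c i = 1 then (if hO i = j then 1 else 0) else 0) = a j := by
      rw [← Finset.sum_filter, ← Finset.card_filter, hhO j]
    have hterm3 : (∑ i, if c i = 2 then tval i j else 0)
        = 2 * b j + ((∑ j', SP j j') + (∑ j', SP j' j)) := by
      rw [← Finset.sum_filter]
      rw [← Finset.sum_fiberwise_of_maps_to
        (t := (univ : Finset (Fin k ⊕ (Fin k × Fin k)))) (g := hW)
        (fun i _ => mem_univ _) (fun i => tval i j)]
      have hinner : ∀ y : Fin k ⊕ (Fin k × Fin k),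
          (∑ i ∈ (univ.filter (fun i : Fin m => c i = 2)).filter (fun i => hW i = y), tval i j)
          = (Sum.elim b (fun q : Fin k × Fin k => SP q.1 q.2) y)
            * (Sum.elim (fun j0 => if j0 = j then 2 else 0)
              (fun q : Fin k × Fin k => (if q.1 = j then 1 else 0) + (if q.2 = j then 1 else 0)) y) := by
        intro y
        have hconst : ∀ i ∈ (univ.filter (fun i : Fin m => c i = 2)).filter (fun i => hW i = y),
            tval i j = (Sum.elim (fun j0 => if j0 = j then 2 else 0)
              (fun q : Fin k × Fin k => (if q.1 = j then 1 else 0) + (if q.2 = j then 1 else 0)) y) := by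
          intro i hi
          rw [htval']
          simp only
          rw [(Finset.mem_filter.mp hi).2]
        rw [Finset.sum_congr rfl hconst, Finset.sum_const, hhW y, smul_eq_mul]
      rw [Finset.sum_congr rfl (fun y _ => hinner y)]
      rw [Fintype.sum_sum_type]
      simp only [Sum.elim_inl, Sum.elim_inr]
      have hfst : (∑ j0 : Fin k, b j0 * (if j0 = j then 2 else 0)) = 2 * b j := by
        have : ∀ j0 : Fin k, b j0 * (if j0 = j then 2 else 0) = if j0 = j then 2 * b j0 else 0 := by
          intro j0; split <;> ring
        rw [Finset.sum_congr rfl (fun j0 _ => this j0), Finset.sum_ite_eq' univ j (fun j0 => 2 * b j0)]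
        simp
      have hsnd : (∑ q : Fin k × Fin k, SP q.1 q.2 * ((if q.1 = j then 1 else 0) + (if q.2 = j then 1 else 0)))
          = (∑ j', SP j j') + (∑ j', SP j' j) := by
        rw [Fintype.sum_prod_type]
        have hexp : ∀ j1 j2 : Fin k, SP j1 j2 * ((if j1 = j then 1 else 0) + (if j2 = j then 1 else 0))
            = (if j1 = j then SP j1 j2 else 0) + (if j2 = j then SP j1 j2 else 0) := by
          intro j1 j2
          by_cases h1' : j1 = j <;> by_cases h2' : j2 = j <;> simp [h1', h2'] <;> ring
        simp only [hexp, Finset.sum_add_distrib]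
        congr 1
        · have hin : ∀ j1 : Fin k, (∑ j2 : Fin k, if j1 = j then SP j1 j2 else 0)
              = if j1 = j then (∑ j2, SP j1 j2) else 0 := by
            intro j1; split <;> simp
          rw [Finset.sum_congr rfl (fun j1 _ => hin j1),
            Finset.sum_ite_eq' univ j (fun j1 => ∑ j2, SP j1 j2)]
          simp
        · rw [Finset.sum_congr rfl (fun j1 _ => Finset.sum_ite_eq' univ j (fun j2 => SP j1 j2))]
          simp
      rw [hfst, hsnd]
    rw [hterm1, hterm2, hterm3]
    have hF1 := F1 j (mem_univ j)
    have hsp : (∑ j', (SP j j' + SP j' j)) = (∑ j', SP j j') + (∑ j', SP j' j) :=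
      Finset.sum_add_distrib
    have := hℓle j
    omega
  -- per-component vertex assignment
  have hassign : ∀ i : Fin m, ∃ h : Fin n → Fin k,
      ∀ j, ((univ.filter (fun v => comp v = i)).filter (fun v => h v = j)).card = g i j :=
    fun i => distribute _ _ (g i) rfl (by rw [hrow i, hfiber i])
  choose H hH using hassign
  set P : Fin n → Fin k := fun v => H (comp v) v with hPdef
  -- part sizes
  have hpart : ∀ j, (univ.filter (fun v => P v = j)).card = t j := by
    intro j
    rw [Finset.card_eq_sum_card_fiberwise
      (f := comp) (s := univ.filter (fun v => P v = j)) (t := univ) (fun x _ => mem_univ _)]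
    have hfib : ∀ i : Fin m, ((univ.filter (fun v => P v = j)).filter (fun v => comp v = i))
        = (univ.filter (fun v => comp v = i)).filter (fun v => H i v = j) := by
      intro i
      ext v
      simp only [Finset.mem_filter, Finset.mem_univ, true_and]
      constructor
      · rintro ⟨hPv, hcv⟩
        refine ⟨hcv, ?_⟩
        rw [← hcv]
        exact hPv
      · rintro ⟨hcv, hHv⟩
        refine ⟨?_, hcv⟩
        rw [hPdef]
        simp only
        rw [hcv]
        exact hHv
    rw [Finset.sum_congr rfl (fun i _ => by rw [hfib i, hH i j])]
    rw [← hcol j]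
  have hbal : IsBalancedPartition P := by
    intro j j'
    rw [hpart j, hpart j']
    have h1' := htval j
    have h2' := htval j'
    omega
  -- concentration
  have hconc : ∀ i j0, g i j0 = c i → ∀ x, comp x = i → P x = j0 := by
    intro i j0 hgic x hx
    have h1' : ((univ.filter (fun v => comp v = i)).filter (fun v => H i v = j0)).card
        = (univ.filter (fun v => comp v = i)).card := by
      rw [hH i j0, hgic, hfiber i]
    have h2' := Finset.eq_of_subset_of_card_le
      (Finset.filter_subset (fun v => H i v = j0) (univ.filter (fun v => comp v = i)))
      (le_of_eq h1'.symm)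
    have hxmem : x ∈ univ.filter (fun v => comp v = i) := by
      simp [hx]
    rw [← h2'] at hxmem
    have hHx := (Finset.mem_filter.mp hxmem).2
    rw [hPdef]
    simp only
    rw [hx]
    exact hHx
  -- concentration witnesses by size
  have hgbig : ∀ i, 3 ≤ c i → g i (Fb i) = c i := by
    intro i h
    have hn1 : ¬ c i = 1 := by omega
    have hn2 : ¬ c i = 2 := by omega
    rw [hg]
    simp [h, hn1, hn2]
  have hgone : ∀ i, c i = 1 → g i (hO i) = c i := by
    intro i h
    have hn3 : ¬ 3 ≤ c i := by omega
    have hn2 : ¬ c i = 2 := by omega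
    rw [hg]
    simp [h, hn3, hn2]
  have hgtwol : ∀ i j0, c i = 2 → hW i = Sum.inl j0 → g i j0 = c i := by
    intro i j0 h hWi
    have hn3 : ¬ 3 ≤ c i := by omega
    have hn1 : ¬ c i = 1 := by omega
    rw [hg, htval']
    simp [h, hn3, hn1, hWi]
  have hgtwor : ∀ i q, c i = 2 → hW i = Sum.inr q → q.1 = q.2 → g i q.1 = c i := by
    intro i q h hWi hq
    have hn3 : ¬ 3 ≤ c i := by omega
    have hn1 : ¬ c i = 1 := by omega
    rw [hg, htval']
    simp [h, hn3, hn1, hWi, ← hq]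
  -- split components
  set Wsplit := (univ.filter (fun i : Fin m => c i = 2)).filter (fun i => (hW i).isRight)
    with hWs
  have hWscard : Wsplit.card = ∑ u, ∑ v, SP u v := by
    rw [Finset.card_eq_sum_card_fiberwise
      (f := hW) (s := Wsplit) (t := univ) (fun x _ => mem_univ _)]
    rw [Fintype.sum_sum_type]
    have hzero : ∀ j0 : Fin k, (Wsplit.filter (fun i => hW i = Sum.inl j0)).card = 0 := by
      intro j0
      rw [Finset.card_eq_zero, Finset.eq_empty_iff_forall_notMem]
      intro i hi
      have h1' := Finset.mem_filter.mp hi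
      have h2' := (Finset.mem_filter.mp h1'.1).2
      rw [h1'.2] at h2'
      simp at h2'
    have hright : ∀ q : Fin k × Fin k,
        (Wsplit.filter (fun i => hW i = Sum.inr q)) =
        ((univ.filter (fun i : Fin m => c i = 2)).filter (fun i => hW i = Sum.inr q)) := by
      intro q
      ext i
      simp only [hWs, Finset.mem_filter, Finset.mem_univ, true_and]
      constructor
      · rintro ⟨⟨h1', _⟩, h3'⟩
        exact ⟨h1', h3'⟩
      · rintro ⟨h1', h2'⟩
        refine ⟨⟨h1', ?_⟩, h2'⟩
        rw [h2']
        rfl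
    have e1 : (∑ j0 : Fin k, (Wsplit.filter (fun i => hW i = Sum.inl j0)).card) = 0 :=
      Finset.sum_eq_zero (fun j0 _ => hzero j0)
    have e2 : (∑ q : Fin k × Fin k, (Wsplit.filter (fun i => hW i = Sum.inr q)).card)
        = ∑ q : Fin k × Fin k, SP q.1 q.2 := by
      refine Finset.sum_congr rfl (fun q _ => ?_)
      rw [hright q]
      have := hhW (Sum.inr q)
      simpa using this
    rw [e1, e2, Fintype.sum_prod_type]
    simp
  -- key edge analysis
  have hedge : ∀ z : Sym2 (Fin n), z ∈ G.edgeSet → ¬ (Sym2.map P z).IsDiag →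
      G.Adj z.out.1 z.out.2 ∧
      comp z.out.2 = e (G.connectedComponentMk z.out.1) ∧
      c (e (G.connectedComponentMk z.out.1)) = 2 ∧
      (hW (e (G.connectedComponentMk z.out.1))).isRight = true := by
    intro z hze hzd
    have hzuv : s(z.out.1, z.out.2) = z := by
      show Sym2.mk z.out.1 z.out.2 = z
      rw [Sym2.mk, Prod.mk.eta, z.out_eq]
    set u := z.out.1 with hu
    set v := z.out.2 with hv
    have hadj : G.Adj u v := by
      rw [← hzuv] at hze
      exact (SimpleGraph.mem_edgeSet G).mp hze
    have hcc : G.connectedComponentMk u = G.connectedComponentMk v :=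
      SimpleGraph.ConnectedComponent.sound hadj.reachable
    have hPne : P u ≠ P v := by
      intro hPeq
      apply hzd
      rw [← hzuv, Sym2.map_pair_eq]
      exact Sym2.mk_isDiag_iff.mpr hPeq
    have hcu : comp u = e (G.connectedComponentMk u) := rfl
    have hcv : comp v = e (G.connectedComponentMk u) := by
      rw [hcomp]
      simp only
      rw [← hcc]
    set i := e (G.connectedComponentMk u) with hi
    have hci2 : c i = 2 ∧ (hW i).isRight = true := by
      have hc := hcpos i
      rcases Nat.lt_or_ge (c i) 3 with hcase | hcase
      · have hciv : c i = 1 ∨ c i = 2 := by omega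
        rcases hciv with hc1 | hc2
        · exact absurd (by rw [hconc i (hO i) (hgone i hc1) u hcu,
            hconc i (hO i) (hgone i hc1) v hcv]) hPne
        · refine ⟨hc2, ?_⟩
          cases hWi : hW i with
          | inl j0 =>
            exact absurd (by rw [hconc i j0 (hgtwol i j0 hc2 hWi) u hcu,
              hconc i j0 (hgtwol i j0 hc2 hWi) v hcv]) hPne
          | inr q =>
            by_cases hq : q.1 = q.2
            · exact absurd (by rw [hconc i q.1 (hgtwor i q hc2 hWi hq) u hcu,
                hconc i q.1 (hgtwor i q hc2 hWi hq) v hcv]) hPne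
            · rfl
      · exact absurd (by rw [hconc i (Fb i) (hgbig i hcase) u hcu,
          hconc i (Fb i) (hgbig i hcase) v hcv]) hPne
    exact ⟨hadj, hcv, hci2.1, hci2.2⟩
  -- cut bound
  have hcut : cutSize G P ≤ Wsplit.card := by
    rw [cutSize, ← Set.ncard_coe_finset]
    refine Set.ncard_le_ncard_of_injOn (fun z => e (G.connectedComponentMk z.out.1))
      ?_ ?_ (Wsplit.finite_toSet)
    · -- maps to
      intro z hz
      obtain ⟨hze, hzd⟩ := hz
      obtain ⟨_, _, hci, hWr⟩ := hedge z hze hzd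
      exact Finset.mem_coe.mpr (Finset.mem_filter.mpr
        ⟨Finset.mem_filter.mpr ⟨mem_univ _, hci⟩, hWr⟩)
    · -- injective on cut set
      intro z1 hz1 z2 hz2 heq
      obtain ⟨hze1, hzd1⟩ := hz1
      obtain ⟨hze2, hzd2⟩ := hz2
      obtain ⟨hadj1, hcv1, hci1, _⟩ := hedge z1 hze1 hzd1
      obtain ⟨hadj2, hcv2, hci2, _⟩ := hedge z2 hze2 hzd2
      simp only at heq
      set u1 := z1.out.1
      set v1 := z1.out.2
      set u2 := z2.out.1
      set v2 := z2.out.2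
      set i := e (G.connectedComponentMk u1) with hi
      have hzuv1 : s(u1, v1) = z1 := by
        show Sym2.mk z1.out.1 z1.out.2 = z1
        rw [Sym2.mk, Prod.mk.eta, z1.out_eq]
      have hzuv2 : s(u2, v2) = z2 := by
        show Sym2.mk z2.out.1 z2.out.2 = z2
        rw [Sym2.mk, Prod.mk.eta, z2.out_eq]
      set V := univ.filter (fun x => comp x = i) with hV
      have hVcard : V.card = 2 := by
        rw [hV, hfiber i, hci1]
      have hmemV : ∀ x : Fin n, comp x = i → x ∈ V := by
        intro x hx
        rw [hV]
        simp [hx]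
      have hV1 : ({u1, v1} : Finset (Fin n)) = V := by
        apply Finset.eq_of_subset_of_card_le
        · intro x hx
          rcases Finset.mem_insert.mp hx with h | h
          · subst h; exact hmemV _ rfl
          · rw [Finset.mem_singleton] at h; subst h; exact hmemV _ hcv1
        · rw [hVcard, Finset.card_pair hadj1.ne]
      have hV2 : ({u2, v2} : Finset (Fin n)) = V := by
        apply Finset.eq_of_subset_of_card_le
        · intro x hx
          rcases Finset.mem_insert.mp hx with h | h
          · subst h; exact hmemV _ heq.symm
          · rw [Finset.mem_singleton] at h; subst h
            exact hmemV _ (hcv2.trans heq.symm)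
        · rw [hVcard, Finset.card_pair hadj2.ne]
      have hpair : ({u1, v1} : Finset (Fin n)) = {u2, v2} := by rw [hV1, hV2]
      have hu2m : u2 = u1 ∨ u2 = v1 := by
        have : u2 ∈ ({u1, v1} : Finset (Fin n)) := by rw [hpair]; simp
        simpa using this
      have hv2m : v2 = u1 ∨ v2 = v1 := by
        have : v2 ∈ ({u1, v1} : Finset (Fin n)) := by rw [hpair]; simp
        simpa using this
      have hne2 : u2 ≠ v2 := hadj2.ne
      rw [← hzuv1, ← hzuv2, Sym2.eq_iff]
      rcases hu2m with h | h <;> rcases hv2m with h' | h'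
      · exact absurd (h.trans h'.symm) hne2
      · exact Or.inl ⟨h.symm, h'.symm⟩
      · exact Or.inr ⟨h'.symm, h.symm⟩
      · exact absurd (h.trans h'.symm) hne2
  -- conclude
  have hW2 : Wsplit.card ≤ k / 2 := by
    rw [hWscard]
    have h5 := F5
    rwa [show (univ : Finset (Fin k)).card = k by simp] at h5
  have hmem : cutSize G P ∈
      {w' | ∃ P' : Fin n → Fin k, IsBalancedPartition P' ∧ cutSize G P' = w'} :=
    ⟨P, hbal, rfl⟩
  have hle2 : kSectionWidth G k ≤ k / 2 :=
    le_trans (Nat.sInf_le hmem) (le_trans hcut hW2)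
  calc ((kSectionWidth G k : ℕ) : ℝ) ≤ ((k / 2 : ℕ) : ℝ) := by exact_mod_cast hle2
    _ ≤ (k : ℝ) / 2 := Nat.cast_div_le
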